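/- Upper incomplete moments of the GLMGA distribution: for all σ > 0, a > 0, b > 0, every real r > 0 with rσ < 1/2, and every u > 0, ∫_u^∞ y^r f_{σ,a,b}(y) dy = [(2b)^{-σr} B(1/2 − rσ, a + rσ)/B(1/2,a)] · I_{1/2−rσ, a+rσ}( u^{-1/σ}/(u^{-1/σ} + 2b) ). -/

import Mathlib

open MeasureTheory Real Filter Topology

/-- The (real) beta function `B(m,n) = ∫_0^1 t^(m-1) (1-t)^(n-1) dt`. -/
noncomputable def betaFn (m n : ℝ) : ℝ :=
  ∫ t in (0:ℝ)..1, t ^ (m - 1) * (1 - t) ^ (n - 1)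

/-- The regularized incomplete beta function `I_{m,n}(v)`. -/
noncomputable def regIncBeta (m n v : ℝ) : ℝ :=
  (∫ t in (0:ℝ)..v, t ^ (m - 1) * (1 - t) ^ (n - 1)) / betaFn m n

/-- The GLMGA density `f_{σ,a,b}`. -/
noncomputable def glmga (σ a b y : ℝ) : ℝ :=
  (2 * b) ^ a / (σ * betaFn a (1 / 2)) * y ^ (-(1 / (2 * σ) + 1))
    / (y ^ (-1 / σ) + 2 * b) ^ (a + 1 / 2)

lemma betaIntegrand_intervalIntegrable {m n : ℝ} (hm : 0 < m) (hn : 0 < n) :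
    IntervalIntegrable (fun t : ℝ => t ^ (m - 1) * (1 - t) ^ (n - 1)) volume 0 1 := by
  have h1 : IntervalIntegrable (fun t : ℝ => t ^ (m - 1) * (1 - t) ^ (n - 1)) volume 0 (1/2) := by
    refine (intervalIntegral.intervalIntegrable_rpow' (by linarith)).mul_continuousOn ?_
    have : Set.uIcc (0:ℝ) (1/2) = Set.Icc 0 (1/2) := Set.uIcc_of_le (by norm_num)
    rw [this]
    refine ContinuousOn.rpow_const (by fun_prop) fun x hx => Or.inl ?_
    have := hx.2; intro h; nlinarith [hx.1]
  have h2 : IntervalIntegrable (fun t : ℝ => t ^ (m - 1) * (1 - t) ^ (n - 1)) volume (1/2) 1 := by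
    have hi : IntervalIntegrable (fun t : ℝ => (1 - t) ^ (n - 1)) volume (1/2) 1 := by
      have := (intervalIntegral.intervalIntegrable_rpow' (a := 0) (b := 1/2)
        (r := n - 1) (by linarith)).comp_sub_left 1
      norm_num at this
      exact this.symm
    refine hi.continuousOn_mul ?_
    have : Set.uIcc (1/2 : ℝ) 1 = Set.Icc (1/2) 1 := Set.uIcc_of_le (by norm_num)
    rw [this]
    refine ContinuousOn.rpow_const (by fun_prop) fun x hx => Or.inl ?_
    have := hx.1; intro h; nlinarith
  exact h1.trans h2

lemma betaFn_pos {m n : ℝ} (hm : 0 < m) (hn : 0 < n) : 0 < betaFn m n := by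
  refine intervalIntegral.intervalIntegral_pos_of_pos_on
    (betaIntegrand_intervalIntegrable hm hn) (fun x hx => ?_) one_pos
  exact mul_pos (rpow_pos_of_pos hx.1 _) (rpow_pos_of_pos (by linarith [hx.2]) _)

lemma betaFn_symm (m n : ℝ) : betaFn m n = betaFn n m := by
  unfold betaFn
  have := intervalIntegral.integral_comp_sub_left
    (fun t : ℝ => t ^ (n - 1) * (1 - t) ^ (m - 1)) 1 (a := 0) (b := 1)
  norm_num at this
  rw [← this]
  congr 1
  ext t
  ring_nf

lemma key_alg {σ a b r B t : ℝ} (hσ : 0 < σ) (hb : 0 < b) (hB : B ≠ 0)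
    (ht : 0 < t) (ht1 : t < 1) :
    (σ * (2*b*t/(1-t)) ^ (-σ-1) * (2*b/(1-t)^2)) *
      ((2*b*t/(1-t)) ^ (-(σ*r)) *
        ((2*b)^a/(σ*B) * (2*b*t/(1-t)) ^ (σ+1/2) / ((2*b)^(a+1/2)/(1-t)^(a+1/2))))
    = (2*b)^(-(σ*r))/B * (t^(1/2 - r*σ - 1)*(1-t)^(a + r*σ - 1)) := by
  have hO : (0:ℝ) < 1 - t := by linarith
  have h2b : (0:ℝ) < 2*b := by linarith
  have hw : (0:ℝ) < 2*b*t/(1-t) := by positivity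
  set X := Real.log (2*b) with hX
  set T := Real.log t with hT
  set O := Real.log (1-t) with hOdef
  have logw : Real.log (2*b*t/(1-t)) = X + T - O := by
    rw [Real.log_div (by positivity) (by positivity),
      Real.log_mul (by positivity) (by positivity)]
  have ew : ∀ p : ℝ, (2*b*t/(1-t)) ^ p = Real.exp ((X + T - O) * p) := fun p => by
    rw [Real.rpow_def_of_pos hw, logw]
  have eb : ∀ p : ℝ, (2*b) ^ p = Real.exp (X * p) := fun p => by
    rw [Real.rpow_def_of_pos h2b]
  have et : ∀ p : ℝ, t ^ p = Real.exp (T * p) := fun p => by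
    rw [Real.rpow_def_of_pos ht]
  have eo : ∀ p : ℝ, (1-t) ^ p = Real.exp (O * p) := fun p => by
    rw [Real.rpow_def_of_pos hO]
  have eo2 : (1-t)^2 = Real.exp (O * 2) := by
    rw [← Real.rpow_natCast (1-t) 2, eo]; norm_num
  have ebb : (2:ℝ)*b = Real.exp X := (Real.exp_log h2b).symm
  rw [ew, ew, ew, eb, eb, eb, et, eo, eo, eo2, ebb]
  have H : ∀ p₁ p₂ p₃ q₁ q₂ q₃ : ℝ, p₁+p₂+p₃ = q₁+q₂+q₃ →
      σ * rexp p₁ * rexp p₂ * rexp p₃ * B = σ * B * rexp q₁ * rexp q₂ * rexp q₃ := by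
    intro p₁ p₂ p₃ q₁ q₂ q₃ h
    have : rexp p₁ * rexp p₂ * rexp p₃ = rexp q₁ * rexp q₂ * rexp q₃ := by
      rw [← Real.exp_add, ← Real.exp_add, ← Real.exp_add, ← Real.exp_add, h]
    linear_combination σ * B * this
  field_simp
  simp only [← Real.exp_add]
  ring_nf

/-- upper incomplete moments of the GLMGA distribution. -/
theorem glmga_upper_incomplete_moment (σ a b r u : ℝ) (hσ : 0 < σ) (ha : 0 < a)
    (hb : 0 < b) (hr : 0 < r) (hrσ : r * σ < 1 / 2) (hu : 0 < u) :
    ∫ y in Set.Ioi u, y ^ r * glmga σ a b y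
      = (2 * b) ^ (-(σ * r)) * betaFn (1 / 2 - r * σ) (a + r * σ) / betaFn (1 / 2) a *
        regIncBeta (1 / 2 - r * σ) (a + r * σ)
          (u ^ (-1 / σ) / (u ^ (-1 / σ) + 2 * b)) := by
  have h2b : (0:ℝ) < 2*b := by linarith
  have hBpos := betaFn_pos ha (by norm_num : (0:ℝ) < 1/2)
  have hB : betaFn a (1/2) ≠ 0 := ne_of_gt hBpos
  have hBmn : betaFn (1/2 - r*σ) (a + r*σ) ≠ 0 :=
    ne_of_gt (betaFn_pos (by linarith) (by positivity))
  have hs0 : (0:ℝ) < u ^ (-1/σ) := rpow_pos_of_pos hu _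
  set s0 : ℝ := u ^ (-1/σ) with hs0def
  set v : ℝ := s0 / (s0 + 2*b) with hvdef
  have hv0 : 0 < v := div_pos hs0 (by linarith)
  have hv1 : v < 1 := by
    rw [hvdef, div_lt_one (by linarith)]; linarith
  set f : ℝ → ℝ := fun t => (2*b*t/(1-t)) ^ (-σ) with hfdef
  set f' : ℝ → ℝ := fun t => (-σ) * (2*b*t/(1-t)) ^ (-σ-1) * (2*b/(1-t)^2) with hf'def
  have hwpos : ∀ t ∈ Set.Ioo (0:ℝ) v, 0 < 2*b*t/(1-t) := by
    intro t ht
    have h1 : t < 1 := ht.2.trans hv1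
    have h2 : 0 < 1 - t := by linarith
    have h3 := ht.1
    positivity
  have hexp1 : (-σ) * (-1/σ) = 1 := by field_simp
  have hfs : ∀ t ∈ Set.Ioo (0:ℝ) v, (f t) ^ (-1/σ) = 2*b*t/(1-t) := by
    intro t ht
    rw [hfdef]
    rw [← Real.rpow_mul (hwpos t ht).le, hexp1, Real.rpow_one]
  have hderiv : ∀ t ∈ Set.Ioo (0:ℝ) v, HasDerivAt f (f' t) t := by
    intro t ht
    have ht1 : t < 1 := ht.2.trans hv1
    have hO : (0:ℝ) < 1 - t := by linarith
    have hw := hwpos t ht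
    have hh : HasDerivAt (fun t : ℝ => 2*b*t/(1-t)) (2*b/(1-t)^2) t := by
      have h1 : HasDerivAt (fun t : ℝ => 2*b*t) (2*b) t := by
        simpa using (hasDerivAt_id t).const_mul (2*b)
      have h2 : HasDerivAt (fun t : ℝ => 1-t) (-1) t := by
        simpa using (hasDerivAt_id t).const_sub 1
      have := h1.div h2 (ne_of_gt hO)
      refine this.congr_deriv ?_
      ring
    have hpow : HasDerivAt (fun x : ℝ => x ^ (-σ))
        ((-σ) * (2*b*t/(1-t)) ^ (-σ-1)) (2*b*t/(1-t)) := by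
      simpa using Real.hasDerivAt_rpow_const (p := -σ) (Or.inl (ne_of_gt hw))
    exact hpow.comp t hh
  have hinj : Set.InjOn f (Set.Ioo 0 v) := by
    intro t1 h1 t2 h2 heq
    have e1 := hfs t1 h1
    have e2 := hfs t2 h2
    have heqw : 2*b*t1/(1-t1) = 2*b*t2/(1-t2) := by rw [← e1, ← e2, heq]
    have h11 : t1 < 1 := h1.2.trans hv1
    have h21 : t2 < 1 := h2.2.trans hv1
    have hO1 : (1:ℝ) - t1 ≠ 0 := ne_of_gt (by linarith)
    have hO2 : (1:ℝ) - t2 ≠ 0 := ne_of_gt (by linarith)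
    field_simp at heqw
    nlinarith [heqw]
  have hsigneg : -1/σ < 0 := by
    rw [div_neg_iff]; right; constructor <;> linarith
  have himg : f '' Set.Ioo 0 v = Set.Ioi u := by
    apply Set.eq_of_subset_of_subset
    · rintro y ⟨t, ht, rfl⟩
      have ht1 : t < 1 := ht.2.trans hv1
      have hO : (0:ℝ) < 1 - t := by linarith
      have hw := hwpos t ht
      have hlt : 2*b*t/(1-t) < s0 := by
        rw [div_lt_iff₀ hO]
        have htv := ht.2
        rw [hvdef, lt_div_iff₀ (by linarith)] at htv
        nlinarith
      have h1 : s0 ^ (-σ) < (2*b*t/(1-t)) ^ (-σ) :=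
        Real.rpow_lt_rpow_of_neg hw hlt (by linarith)
      have h2 : s0 ^ (-σ) = u := by
        rw [hs0def, ← Real.rpow_mul hu.le, show (-1/σ) * -σ = 1 by field_simp,
          Real.rpow_one]
      exact Set.mem_Ioi.mpr (h2 ▸ h1)
    · intro y hy
      have hyu : u < y := hy
      have hy0 : 0 < y := hu.trans hyu
      have hs : 0 < y ^ (-1/σ) := rpow_pos_of_pos hy0 _
      set s : ℝ := y ^ (-1/σ) with hsdef
      refine ⟨s/(s+2*b), ⟨by positivity, ?_⟩, ?_⟩
      · have hss0 : s < s0 := by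
          rw [hsdef, hs0def]
          exact Real.rpow_lt_rpow_of_neg hu hyu hsigneg
        rw [hvdef, div_lt_div_iff₀ (by linarith) (by linarith)]
        nlinarith
      · have e : 2*b*(s/(s+2*b))/(1 - s/(s+2*b)) = s := by
          have hne : s + 2*b ≠ 0 := by positivity
          field_simp
          ring
        show (2*b*(s/(s+2*b))/(1 - s/(s+2*b))) ^ (-σ) = y
        rw [e, hsdef, ← Real.rpow_mul hy0.le,
          show (-1/σ)*(-σ) = 1 by field_simp, Real.rpow_one]
  calc ∫ y in Set.Ioi u, y ^ r * glmga σ a b y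
      = ∫ y in f '' Set.Ioo 0 v, y ^ r * glmga σ a b y := by rw [himg]
    _ = ∫ t in Set.Ioo 0 v, |f' t| • ((f t) ^ r * glmga σ a b (f t)) :=
        integral_image_eq_integral_abs_deriv_smul measurableSet_Ioo
          (fun t ht => (hderiv t ht).hasDerivWithinAt) hinj _
    _ = ∫ t in Set.Ioo 0 v,
          (2*b)^(-(σ*r))/betaFn a (1/2) * (t^(1/2 - r*σ - 1)*(1-t)^(a + r*σ - 1)) := by
        refine setIntegral_congr_fun measurableSet_Ioo fun t ht => ?_
        have ht1 : t < 1 := ht.2.trans hv1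
        have hO : (0:ℝ) < 1 - t := by linarith
        have hw := hwpos t ht
        have habs : |f' t| = σ * (2*b*t/(1-t)) ^ (-σ-1) * (2*b/(1-t)^2) := by
          rw [hf'def]
          rw [abs_mul, abs_mul, abs_of_neg (by linarith : -σ < 0),
            abs_of_pos (rpow_pos_of_pos hw _), abs_of_pos (by positivity)]
          ring
        have hfr : (f t) ^ r = (2*b*t/(1-t)) ^ (-(σ*r)) := by
          rw [hfdef, ← Real.rpow_mul hw.le]
          congr 1; ring
        have hfm : (f t) ^ (-(1/(2*σ)+1)) = (2*b*t/(1-t)) ^ (σ+1/2) := by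
          rw [hfdef, ← Real.rpow_mul hw.le]
          congr 1; field_simp; ring
        have hsum : (2*b*t/(1-t)) + 2*b = 2*b/(1-t) := by
          field_simp; ring
        have hdiv : (2*b/(1-t))^(a+1/2) = (2*b)^(a+1/2)/(1-t)^(a+1/2) :=
          Real.div_rpow h2b.le hO.le _
        rw [smul_eq_mul, habs, glmga, hfr, hfm, hfs t ht, hsum, hdiv]
        exact key_alg hσ hb hB ht.1 ht1
    _ = (2*b)^(-(σ*r))/betaFn a (1/2) *
          ∫ t in Set.Ioo 0 v, t^(1/2 - r*σ - 1)*(1-t)^(a + r*σ - 1) :=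
        MeasureTheory.integral_const_mul _ _
    _ = (2 * b) ^ (-(σ * r)) * betaFn (1 / 2 - r * σ) (a + r * σ) / betaFn (1 / 2) a *
        regIncBeta (1 / 2 - r * σ) (a + r * σ) v := by
        rw [regIncBeta]
        have hI : (∫ t in (0:ℝ)..v, t^(1/2 - r*σ - 1)*(1-t)^(a + r*σ - 1))
            = ∫ t in Set.Ioo 0 v, t^(1/2 - r*σ - 1)*(1-t)^(a + r*σ - 1) := by
          rw [intervalIntegral.integral_of_le hv0.le, integral_Ioc_eq_integral_Ioo]
        rw [betaFn_symm (1/2) a]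
        rw [show ((1:ℝ)/2 - r*σ) - 1 = 1/2 - r*σ - 1 from rfl,
          show (a + r*σ) - 1 = a + r*σ - 1 from rfl, hI]
        set I1 := ∫ t in Set.Ioo (0:ℝ) v, t^(1/2 - r*σ - 1)*(1-t)^(a + r*σ - 1) with hI1
        set B1 := betaFn (1/2 - r*σ) (a + r*σ) with hB1
        set B2 := betaFn a (1/2) with hB2
        field_simp
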